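/- Let X be a topological space written as a disjoint union of nonempty clopen subsets X₁, …, X_N, let φ : X → X be a homeomorphism cyclically permuting the X_i (φ(X_i) = X_{i+1 mod N}), and suppose for each i there is a point x_i ∈ X_i whose φ^N-orbit is dense in X_i. If β : X → X is a homeomorphism commuting with φ, then there exists a permutation σ of {1, …, N} such that β(X_i) = X_{σ(i)} for each i. -/

import Mathlib

/-- Lemma 4.16: a homeomorphism commuting with `φ` permutes the mixing components. -/
theorem stmt6 {X : Type*} [TopologicalSpace X] (N : ℕ) [NeZero N]
    (Xs : Fin N → Set X)
    (hne : ∀ i, (Xs i).Nonempty)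
    (hclopen : ∀ i, IsClopen (Xs i))
    (hdisj : ∀ i j, i ≠ j → Disjoint (Xs i) (Xs j))
    (hcover : (⋃ i, Xs i) = Set.univ)
    (φ : X ≃ₜ X) (hφ : ∀ i, (φ : X → X) '' Xs i = Xs (i + 1))
    (x : Fin N → X) (hx : ∀ i, x i ∈ Xs i)
    (hdense : ∀ i, Xs i ⊆ closure (Set.range fun k : ℤ => ((φ.toEquiv ^ (N : ℤ)) ^ k) (x i)))
    (β : X ≃ₜ X) (hβφ : ∀ y : X, β (φ y) = φ (β y)) :
    ∃ σ : Equiv.Perm (Fin N), ∀ i, (β : X → X) '' Xs i = Xs (σ i) := by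
  set e : Equiv.Perm X := φ.toEquiv with he
  set g : Equiv.Perm X := e ^ (N : ℤ) with hgdef
  have hidx : ∀ y : X, ∃ i, y ∈ Xs i := by
    intro y
    have : y ∈ ⋃ i, Xs i := hcover ▸ Set.mem_univ y
    simpa using this
  have heq : ∀ i j (z : X), z ∈ Xs i → z ∈ Xs j → i = j := by
    intro i j z h1 h2
    by_contra hij
    exact (hdisj i j hij).ne_of_mem h1 h2 rfl
  open Fin.NatCast Fin.CommRing in
  have hpow : ∀ (n : ℕ) (i : Fin N), (⇑(e ^ n)) '' Xs i = Xs (i + (n : Fin N)) := by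
    intro n
    induction n with
    | zero => intro i; simp
    | succ n ih =>
      intro i
      have h1 : (⇑(e ^ (n + 1))) '' Xs i = (⇑(e ^ n)) '' ((⇑e) '' Xs i) := by
        rw [pow_succ, ← Set.image_comp]
        rfl
      rw [h1, show (⇑e) '' Xs i = Xs (i + 1) from hφ i, ih]
      congr 1
      push_cast
      ring
  have hNimg : ∀ i, (⇑g) '' Xs i = Xs i := by
    intro i
    have hgN : g = e ^ N := by rw [hgdef, zpow_natCast]
    rw [hgN, hpow N i, Fin.natCast_self, add_zero]
  have hg : ∀ i (y : X), y ∈ Xs i → g y ∈ Xs i := by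
    intro i y hy
    rw [← hNimg i]; exact ⟨y, hy, rfl⟩
  have hg' : ∀ i (y : X), y ∈ Xs i → g.symm y ∈ Xs i := by
    intro i y hy
    rw [← hNimg i] at hy
    obtain ⟨z, hz, rfl⟩ := hy
    simpa using hz
  have horb : ∀ (k : ℤ) (i : Fin N) (y : X), y ∈ Xs i → (g ^ k) y ∈ Xs i := by
    intro k
    induction k using Int.induction_on with
    | zero => intro i y hy; simpa using hy
    | succ k ih =>
      intro i y hy
      rw [zpow_add_one, Equiv.Perm.mul_apply]
      exact ih i _ (hg i y hy)
    | pred k ih =>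
      intro i y hy
      rw [zpow_sub_one, Equiv.Perm.mul_apply]
      have : (g⁻¹ : Equiv.Perm X) y ∈ Xs i := by
        have := hg' i y hy
        simpa using this
      exact ih i _ this
  have key : ∀ γ : X ≃ₜ X, (∀ y : X, γ (φ y) = φ (γ y)) →
      ∀ i, ∃ j, (⇑γ) '' Xs i ⊆ Xs j := by
    intro γ hγ i
    obtain ⟨j, hj⟩ := hidx (γ (x i))
    refine ⟨j, ?_⟩
    have hcn : ∀ (n : ℕ) (y : X), γ ((e ^ n) y) = (e ^ n) (γ y) := by
      intro n
      induction n with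
      | zero => intro y; simp
      | succ n ih =>
        intro y
        rw [pow_succ, Equiv.Perm.mul_apply, Equiv.Perm.mul_apply, ih (e y)]
        congr 1
        exact hγ y
    have hcg : ∀ y : X, γ (g y) = g (γ y) := by
      intro y
      have hgN : g = e ^ N := by rw [hgdef, zpow_natCast]
      rw [hgN]
      exact hcn N y
    have hcg' : ∀ y : X, γ (g.symm y) = g.symm (γ y) := by
      intro y
      have h1 := hcg (g.symm y)
      rw [Equiv.apply_symm_apply] at h1
      exact g.injective (by rw [Equiv.apply_symm_apply, ← h1])
    have hck : ∀ (k : ℤ) (y : X), γ ((g ^ k) y) = (g ^ k) (γ y) := by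
      intro k
      induction k using Int.induction_on with
      | zero => intro y; simp
      | succ k ih =>
        intro y
        rw [zpow_add_one, Equiv.Perm.mul_apply, Equiv.Perm.mul_apply, ih (g y), hcg y]
      | pred k ih =>
        intro y
        rw [zpow_sub_one, Equiv.Perm.mul_apply, Equiv.Perm.mul_apply, ih (g⁻¹ y)]
        congr 1
        have : (g⁻¹ : Equiv.Perm X) y = g.symm y := rfl
        rw [this]
        exact hcg' y
    rintro _ ⟨y, hy, rfl⟩
    have hyc := hdense i hy
    have hmem : γ y ∈ closure ((⇑γ) '' Set.range fun k : ℤ => (g ^ k) (x i)) :=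
      (image_closure_subset_closure_image γ.continuous) ⟨y, hyc, rfl⟩
    have hsub : (⇑γ) '' (Set.range fun k : ℤ => (g ^ k) (x i)) ⊆ Xs j := by
      rintro _ ⟨_, ⟨k, rfl⟩, rfl⟩
      rw [hck k (x i)]
      exact horb k j (γ (x i)) hj
    exact (closure_minimal hsub (hclopen j).isClosed) hmem
  choose J hJ using key β hβφ
  have hβ' : ∀ y : X, β.symm (φ y) = φ (β.symm y) := by
    intro y
    have h1 := hβφ (β.symm y)
    rw [Homeomorph.apply_symm_apply] at h1
    apply β.injective
    rw [Homeomorph.apply_symm_apply, h1]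
  choose J' hJ' using key β.symm hβ'
  have hJJ' : ∀ i, J' (J i) = i := by
    intro i
    have h1 : β (x i) ∈ Xs (J i) := hJ i ⟨x i, hx i, rfl⟩
    have h2 : β.symm (β (x i)) ∈ Xs (J' (J i)) := hJ' (J i) ⟨β (x i), h1, rfl⟩
    rw [Homeomorph.symm_apply_apply] at h2
    exact (heq i (J' (J i)) (x i) (hx i) h2).symm
  have hJ'J : ∀ i, J (J' i) = i := by
    intro i
    have h1 : β.symm (x i) ∈ Xs (J' i) := hJ' i ⟨x i, hx i, rfl⟩
    have h2 : β (β.symm (x i)) ∈ Xs (J (J' i)) := hJ (J' i) ⟨β.symm (x i), h1, rfl⟩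
    rw [Homeomorph.apply_symm_apply] at h2
    exact (heq i (J (J' i)) (x i) (hx i) h2).symm
  refine ⟨⟨J, J', hJJ', hJ'J⟩, ?_⟩
  intro i
  apply Set.Subset.antisymm (hJ i)
  intro y hy
  have h2 : β.symm y ∈ Xs (J' (J i)) := hJ' (J i) ⟨y, hy, rfl⟩
  rw [hJJ' i] at h2
  exact ⟨β.symm y, h2, by simp⟩
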